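/- Consider a linear time-invariant system x_{k+1} = A₁x_k + B₁u_k, y_k = C₁x_k + D₁u_k with state dimension ñ, input dimension m̃ and output dimension p̃. Let (u_d, x_d, y_d) be a length-n_d input-state-output trajectory of the system and let 1 ≤ L ≤ n_d. Assume the matrix H₀ := col(𝓗₁(x_{d,0:n_d−L}), 𝓗_L(u_d)) has full row rank. Then a length-L input-output sequence (u, y) ∈ ℝ^{(m̃+p̃)L} is a trajectory of the system if and only if there exists g ∈ ℝ^{n_d−L+1} such that 𝓗_L(u_d) g = u and 𝓗_L(y_d) g = y. -/

import Mathlib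

/-!
STATEMENT 3 (Willems' fundamental lemma, Lemma 1): For an LTI system with a pre-collected
length-n_d input-state-output trajectory (u_d, x_d, y_d) and 1 ≤ L ≤ n_d, if
H₀ := col(𝓗₁(x_{d,0:n_d-L}), 𝓗_L(u_d)) has full row rank, then a length-L input-output
sequence (u, y) is a trajectory of the system iff ∃ g with 𝓗_L(u_d) g = u, 𝓗_L(y_d) g = y.
-/

/-- Order-`L` (block) Hankel matrix of a length-`T` sequence of vectors in `ℝ^q`:
the `((i,a), j)` entry is the `a`-th component of `ω_{i+j}`. -/
def hankel (q L T : ℕ) (ω : ℕ → Fin q → ℝ) :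
    Matrix (Fin L × Fin q) (Fin (T - L + 1)) ℝ :=
  Matrix.of fun ia j => ω ((ia.1 : ℕ) + (j : ℕ)) ia.2

open Finset in
lemma hankel_mulVec_apply (q L T : ℕ) (ω : ℕ → Fin q → ℝ) (g : Fin (T - L + 1) → ℝ)
    (ia : Fin L × Fin q) :
    (hankel q L T ω).mulVec g ia = (∑ j : Fin (T - L + 1), g j • ω ((ia.1 : ℕ) + j)) ia.2 := by
  simp [hankel, Matrix.mulVec, dotProduct, Finset.sum_apply, mul_comm]

open Finset in
/-- Linear combinations of trajectories obey the same affine relation. -/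
lemma comb {n m p T : ℕ} (M : Matrix (Fin p) (Fin n) ℝ) (N : Matrix (Fin p) (Fin m) ℝ)
    (xs : Fin T → Fin n → ℝ) (us : Fin T → Fin m → ℝ) (w : Fin T → Fin p → ℝ)
    (hw : ∀ j, w j = M.mulVec (xs j) + N.mulVec (us j)) (g : Fin T → ℝ) :
    (∑ j, g j • w j) =
      M.mulVec (∑ j, g j • xs j) + N.mulVec (∑ j, g j • us j) := by
  have hM : M.mulVec (∑ j, g j • xs j) = ∑ j, g j • M.mulVec (xs j) := by
    rw [← Matrix.mulVecLin_apply, map_sum]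
    simp [Matrix.mulVecLin_apply]
  have hN : N.mulVec (∑ j, g j • us j) = ∑ j, g j • N.mulVec (us j) := by
    rw [← Matrix.mulVecLin_apply, map_sum]
    simp [Matrix.mulVecLin_apply]
  rw [hM, hN, ← Finset.sum_add_distrib]
  refine Finset.sum_congr rfl fun j _ => ?_
  rw [hw j, smul_add]

theorem willems_fundamental_lemma
    (ntil mtil ptil nd L : ℕ) (hL : 1 ≤ L) (hLnd : L ≤ nd)
    (A₁ : Matrix (Fin ntil) (Fin ntil) ℝ) (B₁ : Matrix (Fin ntil) (Fin mtil) ℝ)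
    (C₁ : Matrix (Fin ptil) (Fin ntil) ℝ) (D₁ : Matrix (Fin ptil) (Fin mtil) ℝ)
    (ud : ℕ → Fin mtil → ℝ) (xd : ℕ → Fin ntil → ℝ) (yd : ℕ → Fin ptil → ℝ)
    -- (u_d, x_d, y_d) is a length-n_d input-state-output trajectory of the system:
    (hdata : ∀ k < nd, xd (k + 1) = A₁.mulVec (xd k) + B₁.mulVec (ud k) ∧
      yd k = C₁.mulVec (xd k) + D₁.mulVec (ud k))
    -- H₀ = col(𝓗₁(x_{d,0:n_d-L}), 𝓗_L(u_d)) has full row rank: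
    (hrank : (Matrix.fromRows
        (Matrix.of fun (a : Fin ntil) (j : Fin (nd - L + 1)) => xd (j : ℕ) a)
        (hankel mtil L nd ud)).rank
      = Fintype.card (Fin ntil ⊕ Fin L × Fin mtil))
    (u : ℕ → Fin mtil → ℝ) (y : ℕ → Fin ptil → ℝ) :
    -- (u, y) is a length-L trajectory of the system iff
    (∃ x : ℕ → (Fin ntil → ℝ),
      ∀ k < L, x (k + 1) = A₁.mulVec (x k) + B₁.mulVec (u k) ∧
        y k = C₁.mulVec (x k) + D₁.mulVec (u k)) ↔
    -- ∃ g such that 𝓗_L(u_d) g = u and 𝓗_L(y_d) g = y: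
    (∃ g : Fin (nd - L + 1) → ℝ,
      (hankel mtil L nd ud).mulVec g = (fun ia : Fin L × Fin mtil => u (ia.1 : ℕ) ia.2) ∧
      (hankel ptil L nd yd).mulVec g = (fun ia : Fin L × Fin ptil => y (ia.1 : ℕ) ia.2)) := by
  set T := nd - L + 1 with hT
  -- bound used everywhere: indices entering `hdata` stay below `nd`
  have hbound : ∀ (k : ℕ), k < L → ∀ j : Fin T, k + (j : ℕ) < nd := by
    intro k hk j
    have := j.isLt
    omega
  constructor
  · rintro ⟨x, hx⟩
    -- the stacked matrix is surjective
    set M := Matrix.fromRows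
        (Matrix.of fun (a : Fin ntil) (j : Fin (nd - L + 1)) => xd (j : ℕ) a)
        (hankel mtil L nd ud) with hM
    have hsurj : Function.Surjective M.mulVecLin := by
      rw [← LinearMap.range_eq_top]
      apply Submodule.eq_top_of_finrank_eq
      rw [Module.finrank_fintype_fun_eq_card]
      exact hrank
    obtain ⟨g, hg⟩ := hsurj (Sum.elim (x 0) (fun ia : Fin L × Fin mtil => u (ia.1 : ℕ) ia.2))
    rw [Matrix.mulVecLin_apply, hM, Matrix.fromRows_mulVec] at hg
    have hg1 : (Matrix.of fun (a : Fin ntil) (j : Fin (nd - L + 1)) => xd (j : ℕ) a).mulVec g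
        = x 0 := by
      funext a; exact congrFun hg (Sum.inl a)
    have hg2 : (hankel mtil L nd ud).mulVec g
        = fun ia : Fin L × Fin mtil => u (ia.1 : ℕ) ia.2 := by
      funext ia; exact congrFun hg (Sum.inr ia)
    refine ⟨g, hg2, ?_⟩
    -- the combined state
    set z : ℕ → Fin ntil → ℝ := fun k => ∑ j : Fin T, g j • xd (k + (j : ℕ)) with hz
    have hu : ∀ k : ℕ, k < L → (∑ j : Fin T, g j • ud (k + (j : ℕ))) = u k := by
      intro k hk
      funext b
      have := congrFun hg2 (⟨k, hk⟩, b)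
      rw [hankel_mulVec_apply] at this
      simpa using this
    have hz0 : z 0 = x 0 := by
      rw [← hg1]
      funext a
      simp [hz, Matrix.mulVec, dotProduct, Finset.sum_apply, mul_comm]
      rfl
    have hzstep : ∀ k : ℕ, k < L → z (k + 1) = A₁.mulVec (z k) + B₁.mulVec (u k) := by
      intro k hk
      have := comb (T := T) A₁ B₁ (fun j => xd (k + (j : ℕ))) (fun j => ud (k + (j : ℕ)))
        (fun j => xd (k + 1 + (j : ℕ)))
        (fun j => by
          have h := (hdata (k + (j : ℕ)) (hbound k hk j)).1
          simpa [Nat.add_right_comm k 1 (j : ℕ)] using h) g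
      rw [hz]
      simp only at this ⊢
      rw [this, hu k hk]
    have hxz : ∀ k : ℕ, k ≤ L → x k = z k := by
      intro k
      induction k with
      | zero => intro _; exact hz0.symm
      | succ k ih =>
        intro hk1
        have hk : k < L := by omega
        rw [(hx k hk).1, hzstep k hk, ih (le_of_lt hk)]
    -- output relation
    funext ia
    obtain ⟨i, a⟩ := ia
    rw [hankel_mulVec_apply]
    have hcomb := comb (T := T) C₁ D₁ (fun j => xd ((i : ℕ) + (j : ℕ)))
      (fun j => ud ((i : ℕ) + (j : ℕ))) (fun j => yd ((i : ℕ) + (j : ℕ)))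
      (fun j => (hdata ((i : ℕ) + (j : ℕ)) (hbound i i.isLt j)).2) g
    simp only at hcomb ⊢
    rw [hcomb, hu (i : ℕ) i.isLt,
      show (∑ j : Fin T, g j • xd ((i : ℕ) + (j : ℕ))) = x (i : ℕ) from
        (hxz (i : ℕ) (le_of_lt i.isLt)).symm,
      ← (hx (i : ℕ) i.isLt).2]
  · rintro ⟨g, hgu, hgy⟩
    refine ⟨fun k => ∑ j : Fin T, g j • xd (k + (j : ℕ)), fun k hk => ?_⟩
    have hu : (∑ j : Fin T, g j • ud (k + (j : ℕ))) = u k := by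
      funext b
      have := congrFun hgu (⟨k, hk⟩, b)
      rw [hankel_mulVec_apply] at this
      simpa using this
    constructor
    · have := comb (T := T) A₁ B₁ (fun j => xd (k + (j : ℕ))) (fun j => ud (k + (j : ℕ)))
        (fun j => xd (k + 1 + (j : ℕ)))
        (fun j => by
          have h := (hdata (k + (j : ℕ)) (hbound k hk j)).1
          simpa [Nat.add_right_comm k 1 (j : ℕ)] using h) g
      simp only at this ⊢
      rw [this, hu]
    · have hcomb := comb (T := T) C₁ D₁ (fun j => xd (k + (j : ℕ)))
        (fun j => ud (k + (j : ℕ))) (fun j => yd (k + (j : ℕ)))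
        (fun j => (hdata (k + (j : ℕ)) (hbound k hk j)).2) g
      have hy : y k = ∑ j : Fin T, g j • yd (k + (j : ℕ)) := by
        funext b
        have := congrFun hgy (⟨k, hk⟩, b)
        rw [hankel_mulVec_apply] at this
        simpa using this.symm
      simp only at hcomb hy ⊢
      rw [hy, hcomb, hu]
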